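/- Let M be a Hausdorff topological space and let f : ℤ_p^× → M be a continuous function such that f(x) = f(x/(1−px)) for all x ∈ ℤ_p^× (note 1−px is a unit). Then f(x) = f(y) whenever x ≡ y (mod pℤ_p); in particular f is locally constant and is completely determined by the finitely many values f(1), f(2), …, f(p−1). -/

import Mathlib

/-- If `M` is Hausdorff and `f` is continuous on `ℤ_p^× = {x : ℚ_p | ‖x‖ = 1}` with
`f(x) = f(x/(1 − px))` for all `x ∈ ℤ_p^×`, then `f(x) = f(y)` whenever
`x ≡ y (mod pℤ_p)`; in particular `f` is determined by finitely many values. -/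
theorem stmt13 (p : ℕ) [Fact p.Prime] (M : Type*) [TopologicalSpace M] [T2Space M]
    (f : ℚ_[p] → M) (hf : ContinuousOn f {x : ℚ_[p] | ‖x‖ = 1})
    (h : ∀ x : ℚ_[p], ‖x‖ = 1 → f x = f (x / (1 - (p : ℚ_[p]) * x))) :
    ∀ x y : ℚ_[p], ‖x‖ = 1 → ‖y‖ = 1 → ‖x - y‖ ≤ (p : ℝ)⁻¹ → f x = f y := by
  intro x y hx hy hxy
  have hp1 : (1 : ℝ) < p := Nat.one_lt_cast.mpr (Fact.out : p.Prime).one_lt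
  have hpinv : (p : ℝ)⁻¹ < 1 := inv_lt_one_of_one_lt₀ hp1
  have hpinv0 : (0 : ℝ) < (p : ℝ)⁻¹ := by positivity
  have hp0 : (p : ℚ_[p]) ≠ 0 := by
    intro h0
    have := Padic.norm_p (p := p)
    rw [h0, norm_zero] at this
    exact absurd this (ne_of_lt hpinv0)
  have hx0 : x ≠ 0 := by intro h0; rw [h0, norm_zero] at hx; norm_num at hx
  have hy0 : y ≠ 0 := by intro h0; rw [h0, norm_zero] at hy; norm_num at hy
  -- the denominators are units
  have hden : ∀ z : ℚ_[p], ‖z‖ ≤ 1 → ‖1 - z * (p : ℚ_[p]) * x‖ = 1 := by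
    intro z hz
    have hlt : ‖z * (p : ℚ_[p]) * x‖ < 1 := by
      rw [norm_mul, norm_mul, Padic.norm_p, hx, mul_one]
      calc ‖z‖ * (p : ℝ)⁻¹ ≤ 1 * (p : ℝ)⁻¹ :=
            mul_le_mul_of_nonneg_right hz (le_of_lt hpinv0)
        _ < 1 := by rwa [one_mul]
    have hne : ‖(1 : ℚ_[p])‖ ≠ ‖-(z * (p : ℚ_[p]) * x)‖ := by
      rw [norm_one, norm_neg]; exact fun he => absurd he.symm (ne_of_lt hlt)
    rw [sub_eq_add_neg, Padic.add_eq_max_of_ne hne, norm_one, norm_neg,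
      max_eq_left (le_of_lt hlt)]
  have hdne : ∀ z : ℚ_[p], ‖z‖ ≤ 1 → (1 - z * (p : ℚ_[p]) * x) ≠ 0 := by
    intro z hz h0; have := hden z hz; rw [h0, norm_zero] at this; norm_num at this
  set g : ℚ_[p] → ℚ_[p] := fun z => x / (1 - z * (p : ℚ_[p]) * x) with hgdef
  have hgnorm : ∀ z : ℚ_[p], ‖z‖ ≤ 1 → ‖g z‖ = 1 := by
    intro z hz
    simp only [hgdef, norm_div, hden z hz, hx, div_one]
  -- the basic step identity
  have hstep : ∀ z : ℚ_[p], ‖z‖ ≤ 1 → g z / (1 - (p : ℚ_[p]) * g z) = g (z + 1) := by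
    intro z hz
    have h1 : (1 : ℚ_[p]) - z * p * x ≠ 0 := hdne z hz
    have hz1 : ‖z + 1‖ ≤ 1 := by
      calc ‖z + 1‖ ≤ max ‖z‖ ‖(1 : ℚ_[p])‖ := Padic.nonarchimedean _ _
        _ ≤ 1 := by rw [norm_one]; exact max_le hz le_rfl
    have h2 : (1 : ℚ_[p]) - (z + 1) * p * x ≠ 0 := hdne _ hz1
    have e1 : (1 : ℚ_[p]) - p * (x / (1 - z * p * x)) = (1 - (z + 1) * p * x) / (1 - z * p * x) := by
      rw [eq_div_iff h1, sub_mul, mul_assoc (p : ℚ_[p]) (x / (1 - z * p * x)) (1 - z * p * x),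
        div_mul_cancel₀ x h1]
      ring
    have h3 : (1 : ℚ_[p]) - p * (x / (1 - z * p * x)) ≠ 0 := e1 ▸ div_ne_zero h2 h1
    simp only [hgdef]
    rw [div_eq_div_iff h3 h2, e1]
    field_simp
  -- f is constant on the orbit of x
  have horb : ∀ k : ℤ, f (g (k : ℚ_[p])) = f x := by
    intro k
    induction k using Int.induction_on with
    | zero => simp only [hgdef, Int.cast_zero, zero_mul, sub_zero, div_one]
    | succ k ih =>
      have hk : ‖(((k : ℤ) : ℚ_[p]))‖ ≤ 1 := Padic.norm_int_le_one _
      have hthis := h (g ((k : ℤ) : ℚ_[p])) (hgnorm _ hk)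
      rw [hstep _ hk] at hthis
      have e : (((k : ℤ) + 1 : ℤ) : ℚ_[p]) = ((k : ℤ) : ℚ_[p]) + 1 := by push_cast; ring
      rw [e, ← hthis]
      exact ih
    | pred k ih =>
      have hk : ‖((-(k : ℤ) - 1 : ℤ) : ℚ_[p])‖ ≤ 1 := Padic.norm_int_le_one _
      have hthis := h (g ((-(k : ℤ) - 1 : ℤ) : ℚ_[p])) (hgnorm _ hk)
      rw [hstep _ hk] at hthis
      have e : ((-(k : ℤ) - 1 : ℤ) : ℚ_[p]) + 1 = ((-(k : ℤ) : ℤ) : ℚ_[p]) := by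
        push_cast; ring
      rw [e] at hthis
      rw [hthis, ih]
  -- the limit point t with g t = y
  set t : ℚ_[p] := (y - x) / ((p : ℚ_[p]) * x * y) with htdef
  have hnt : ‖t‖ ≤ 1 := by
    rw [htdef, norm_div, norm_mul, norm_mul, Padic.norm_p, hx, hy, mul_one, mul_one]
    rw [div_le_one hpinv0, ← norm_neg, neg_sub]
    exact hxy
  have hgt : g t = y := by
    have e1 : (1 : ℚ_[p]) - t * p * x = x / y := by
      rw [htdef]
      field_simp
      ring
    simp only [hgdef]
    rw [e1, div_div_eq_mul_div, mul_comm x y, mul_div_assoc, div_self hx0, mul_one]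
  -- approximate t by integers
  set t' : ℤ_[p] := ⟨t, hnt⟩ with ht'def
  have hdense : t' ∈ closure (Set.range (Int.cast : ℤ → ℤ_[p])) := by
    have := PadicInt.denseRange_intCast (p := p)
    exact this t'
  obtain ⟨u, humem, hulim⟩ := mem_closure_iff_seq_limit.mp hdense
  choose k hk using humem
  have hcoe : Isometry (fun z : ℤ_[p] => (z : ℚ_[p])) :=
    Isometry.of_dist_eq fun a b => rfl
  have hklim : Filter.Tendsto (fun n => ((u n : ℤ_[p]) : ℚ_[p])) Filter.atTop (nhds t) := by
    have := (hcoe.continuous.tendsto t').comp hulim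
    exact this
  have hkval : ∀ n, ((u n : ℤ_[p]) : ℚ_[p]) = ((k n : ℤ) : ℚ_[p]) := by
    intro n
    rw [← hk n]
    simp
  -- the approximating sequence
  set c : ℕ → ℚ_[p] := fun n => g ((k n : ℤ) : ℚ_[p]) with hcdef
  have hclim : Filter.Tendsto c Filter.atTop (nhds y) := by
    have hd : Filter.Tendsto (fun n => 1 - ((k n : ℤ) : ℚ_[p]) * p * x) Filter.atTop
        (nhds (1 - t * p * x)) := by
      apply Filter.Tendsto.sub tendsto_const_nhds
      apply Filter.Tendsto.mul (Filter.Tendsto.mul _ tendsto_const_nhds) tendsto_const_nhds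
      simpa only [hkval] using hklim
    have hne : (1 : ℚ_[p]) - t * p * x ≠ 0 := hdne t hnt
    have := Filter.Tendsto.div (tendsto_const_nhds (x := x)) hd hne
    rw [show x / (1 - t * p * x) = y from hgt] at this
    exact this
  have hcmem : ∀ n, c n ∈ {x : ℚ_[p] | ‖x‖ = 1} :=
    fun n => hgnorm _ (Padic.norm_int_le_one _)
  have hclim' : Filter.Tendsto c Filter.atTop (nhdsWithin y {x : ℚ_[p] | ‖x‖ = 1}) :=
    tendsto_nhdsWithin_of_tendsto_nhds_of_eventually_within c hclim
      (Filter.Eventually.of_forall hcmem)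
  have hfy : Filter.Tendsto (f ∘ c) Filter.atTop (nhds (f y)) :=
    ((hf y hy).tendsto).comp hclim'
  have hfx : Filter.Tendsto (f ∘ c) Filter.atTop (nhds (f x)) := by
    have : f ∘ c = fun _ => f x := funext fun n => horb (k n)
    rw [this]
    exact tendsto_const_nhds
  exact tendsto_nhds_unique hfx hfy
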